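/- Let H be an oriented hyperplane through the origin in ℝⁿ and let T be a map on measurable functions that is pointwise with respect to H, with associated functions F⁺, F⁻. Then T is equimeasurable if and only if {F⁺(r,s), F⁻(s,r)} = {r,s} for all r, s ∈ ℝ. -/

import Mathlib

open MeasureTheory Set RealInnerProductSpace

open scoped ENNReal in
lemma enn_helper_stmt8 {m : ℝ≥0∞} (h0 : m ≠ 0) (ht : m ≠ ⊤) {p q p' q' : Prop}
    [Decidable p] [Decidable q] [Decidable p'] [Decidable q']
    (h : (if p then m else 0) + (if q then m else 0)
       = (if p' then m else 0) + (if q' then m else 0)) :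
    ((p ∨ q) ↔ (p' ∨ q')) ∧ ((p ∧ q) ↔ (p' ∧ q')) := by
  have conv : ∀ (r : Prop) [Decidable r],
      (if r then m else 0) = ((if r then 1 else 0 : ℕ) : ℝ≥0∞) * m := by
    intro r _; split_ifs <;> simp
  rw [conv p, conv q, conv p', conv q', ← add_mul, ← add_mul, ← Nat.cast_add, ← Nat.cast_add] at h
  have h' : ((if p then 1 else 0) + (if q then 1 else 0) : ℕ)
      = ((if p' then 1 else 0) + (if q' then 1 else 0) : ℕ) := by
    have := (ENNReal.mul_left_inj h0 ht).1 h
    exact_mod_cast this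
  split_ifs at h' <;> first | omega | tauto

lemma pair_of_counts_stmt8 (a b r s : ℝ)
    (h : ∀ t : ℝ, ((t < a ∨ t < b) ↔ (t < r ∨ t < s)) ∧ ((t < a ∧ t < b) ↔ (t < r ∧ t < s))) :
    ({a, b} : Set ℝ) = {r, s} := by
  have hmax : a ⊔ b = r ⊔ s :=
    eq_of_forall_lt_iff fun t => by
      rw [lt_sup_iff, lt_sup_iff]; exact (h t).1
  have hmin : a ⊓ b = r ⊓ s :=
    eq_of_forall_lt_iff fun t => by
      rw [lt_inf_iff, lt_inf_iff]; exact (h t).2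
  rw [Set.pair_eq_pair_iff]
  rcases le_total a b with hab | hab <;> rcases le_total r s with hrs | hrs
  · rw [sup_eq_right.2 hab, sup_eq_right.2 hrs] at hmax
    rw [inf_eq_left.2 hab, inf_eq_left.2 hrs] at hmin
    exact Or.inl ⟨hmin, hmax⟩
  · rw [sup_eq_right.2 hab, sup_eq_left.2 hrs] at hmax
    rw [inf_eq_left.2 hab, inf_eq_right.2 hrs] at hmin
    exact Or.inr ⟨hmin, hmax⟩
  · rw [sup_eq_left.2 hab, sup_eq_right.2 hrs] at hmax
    rw [inf_eq_right.2 hab, inf_eq_left.2 hrs] at hmin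
    exact Or.inr ⟨hmax, hmin⟩
  · rw [sup_eq_left.2 hab, sup_eq_left.2 hrs] at hmax
    rw [inf_eq_right.2 hab, inf_eq_right.2 hrs] at hmin
    exact Or.inl ⟨hmax, hmin⟩

open scoped Classical in
lemma vol_level_stmt8 {α : Type*} [MeasurableSpace α] (μ : Measure α) (A B : Set α)
    (hB : MeasurableSet B) (hd : Disjoint A B)
    (p q b t : ℝ) (hbt : ¬ t < b) :
    μ {x | t < (if x ∈ A then p else if x ∈ B then q else b)} =
      (if t < p then μ A else 0) + (if t < q then μ B else 0) := by
  classical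
  have hset : {x | t < (if x ∈ A then p else if x ∈ B then q else b)} =
      (if t < p then A else ∅) ∪ (if t < q then B else ∅) := by
    ext x
    by_cases hxA : x ∈ A <;> by_cases hxB : x ∈ B
    · exact absurd hxB (Set.disjoint_left.1 hd hxA)
    all_goals simp only [Set.mem_setOf_eq, Set.mem_union, hxA, hxB, if_true, if_false] <;>
      split_ifs <;> simp_all
  rw [hset, measure_union]
  · congr 1 <;> split_ifs <;> simp
  · split_ifs <;> simp [Set.disjoint_left] <;>
      intro x hx hxB <;> exact Set.disjoint_left.1 hd hx hxB
  · split_ifs <;> simp [hB]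

theorem stmt_8 {n : ℕ} (u : EuclideanSpace ℝ (Fin n)) (hu : ‖u‖ = 1)
    (T : (EuclideanSpace ℝ (Fin n) → ℝ) → (EuclideanSpace ℝ (Fin n) → ℝ))
    (Fp Fm : ℝ → ℝ → ℝ)
    (hdiag : ∀ s : ℝ, Fp s s = Fm s s)
    (hpt : ∀ f x, T f x =
      if 0 ≤ ⟪x, u⟫ then Fp (f x) (f (x - (2 * ⟪x, u⟫) • u))
      else Fm (f x) (f (x - (2 * ⟪x, u⟫) • u)))
    (hmeas : ∀ f, Measurable f → Measurable (T f)) :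
    (∀ f : EuclideanSpace ℝ (Fin n) → ℝ, Measurable f → ∀ t : ℝ,
        volume {x | t < T f x} = volume {x | t < f x}) ↔
      ∀ r s : ℝ, ({Fp r s, Fm s r} : Set ℝ) = {r, s} := by
  classical
  haveI : Nontrivial (EuclideanSpace ℝ (Fin n)) :=
    nontrivial_of_ne u 0 (fun h => by simp [h] at hu)
  have huu : ⟪u, u⟫ = 1 := by
    rw [real_inner_self_eq_norm_sq, hu]; norm_num
  set σ : EuclideanSpace ℝ (Fin n) → EuclideanSpace ℝ (Fin n) :=
    fun x => x - (2 * ⟪x, u⟫) • u with hσdef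
  have hσapp : ∀ x, x - (2 * ⟪x, u⟫) • u = σ x := fun x => rfl
  have hσR : ∀ x, (Submodule.reflection ((ℝ ∙ u)ᗮ)) x = σ x := by
    intro x
    rw [Submodule.reflection_orthogonal_apply, Submodule.reflection_singleton_apply, real_inner_comm, hu]
    push_cast
    rw [one_pow, div_one, two_smul]
    show _ = x - (2 * ⟪x, u⟫) • u
    module
  have hσfun : ⇑(Submodule.reflection ((ℝ ∙ u)ᗮ)) = σ := funext hσR
  have hmp : MeasurePreserving σ volume volume := by
    rw [← hσfun]; exact (Submodule.reflection ((ℝ ∙ u)ᗮ)).measurePreserving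
  have hσmeas : Measurable σ := hmp.measurable
  have hinner : ∀ x, ⟪σ x, u⟫ = -⟪x, u⟫ := by
    intro x
    show ⟪x - (2 * ⟪x, u⟫) • u, u⟫ = -⟪x, u⟫
    rw [inner_sub_left, real_inner_smul_left, huu]; ring
  have hσσ : ∀ x, σ (σ x) = x := by
    intro x
    show σ x - (2 * ⟪σ x, u⟫) • u = x
    rw [hinner]
    show x - (2 * ⟪x, u⟫) • u - (2 * -⟪x, u⟫) • u = x
    module
  have hvol_univ : volume (univ : Set (EuclideanSpace ℝ (Fin n))) = ⊤ :=
    measure_univ_of_isAddLeftInvariant volume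
  constructor
  · -- equimeasurable → pair condition
    intro h r s
    have hfix : ∀ b : ℝ, Fp b b = b := by
      intro b
      have hTf : ∀ x, T (fun _ => b) x = Fp b b := by
        intro x; rw [hpt]; split_ifs with h1
        · rfl
        · exact (hdiag b).symm
      have key := h (fun _ => b) measurable_const
      by_contra hne
      rcases lt_or_gt_of_ne hne with hlt | hlt
      · have h2 := key (Fp b b)
        rw [show {x | Fp b b < T (fun _ => b) x} = (∅ : Set _) from by
          ext x; simp [hTf], show {x : EuclideanSpace ℝ (Fin n) | Fp b b < b} = univ from by
          ext x; simp [hlt]] at h2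
        simp [hvol_univ] at h2
      · have h2 := key b
        rw [show {x | b < T (fun _ => b) x} = (univ : Set _) from by
          ext x; simp [hTf, hlt], show {x : EuclideanSpace ℝ (Fin n) | b < b} = (∅ : Set _) from by
          ext x; simp] at h2
        simp [hvol_univ] at h2
    set A := Metric.ball u (1/2 : ℝ) with hAdef
    set B := Metric.ball (-u) (1/2 : ℝ) with hBdef
    have hAin : ∀ x ∈ A, 0 < ⟪x, u⟫ := by
      intro x hx
      have h1 : ⟪x, u⟫ = ⟪x - u, u⟫ + 1 := by rw [inner_sub_left, huu]; ring
      have h2 : |⟪x - u, u⟫| ≤ ‖x - u‖ * ‖u‖ := abs_real_inner_le_norm _ _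
      rw [hu, mul_one] at h2
      have h3 : ‖x - u‖ < 1/2 := by
        have := Metric.mem_ball.1 hx; rwa [dist_eq_norm] at this
      have := abs_le.1 h2
      rw [h1]; linarith [this.1]
    have hBin : ∀ x ∈ B, ⟪x, u⟫ < 0 := by
      intro x hx
      have h1 : ⟪x, u⟫ = ⟪x - -u, u⟫ - 1 := by
        rw [inner_sub_left, inner_neg_left, huu]; ring
      have h2 : |⟪x - -u, u⟫| ≤ ‖x - -u‖ * ‖u‖ := abs_real_inner_le_norm _ _
      rw [hu, mul_one] at h2
      have h3 : ‖x - -u‖ < 1/2 := by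
        have := Metric.mem_ball.1 hx; rwa [dist_eq_norm] at this
      have := abs_le.1 h2
      rw [h1]; linarith [this.2]
    have hd : Disjoint A B := Set.disjoint_left.2 fun x hxA hxB =>
      absurd (hAin x hxA) (not_lt.2 (hBin x hxB).le)
    have hσu : σ u = -u := by
      show u - (2 * ⟪u, u⟫) • u = -u
      rw [huu]; module
    have hdist : ∀ x y, dist (σ x) (σ y) = dist x y := by
      intro x y; rw [← hσR, ← hσR]; exact (Submodule.reflection ((ℝ ∙ u)ᗮ)).dist_map x y
    have hσAB : ∀ x ∈ A, σ x ∈ B := by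
      intro x hx
      have : dist (σ x) (-u) = dist x u := by rw [← hσu]; exact hdist x u
      exact Metric.mem_ball.2 (by rw [this]; exact Metric.mem_ball.1 hx)
    have hσnu : σ (-u) = u := by rw [← hσu, hσσ]
    have hσBA : ∀ x ∈ B, σ x ∈ A := by
      intro x hx
      have h' : dist (σ x) (σ (-u)) = dist x (-u) := hdist x (-u)
      rw [hσnu] at h'
      exact Metric.mem_ball.2 (by rw [h']; exact Metric.mem_ball.1 hx)
    have hm0 : volume A ≠ 0 := (Metric.measure_ball_pos volume u (by norm_num)).ne'
    have hmt : volume A ≠ ⊤ := measure_ball_lt_top.ne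
    have hmB : volume B = volume A := by
      rw [hBdef, hAdef, Measure.addHaar_ball_center, Measure.addHaar_ball_center volume u]
    set b0 := min (min r s) (min (Fp r s) (Fm s r)) - 1 with hb0def
    set f : EuclideanSpace ℝ (Fin n) → ℝ :=
      fun x => if x ∈ A then r else if x ∈ B then s else b0 with hfdef
    have hf : Measurable f := by
      apply Measurable.ite measurableSet_ball measurable_const
      exact Measurable.ite measurableSet_ball measurable_const measurable_const
    have hTf : T f = fun x => if x ∈ A then Fp r s else if x ∈ B then Fm s r else b0 := by
      funext x
      rw [hpt, hσapp]
      by_cases hxA : x ∈ A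
      · have h1 : 0 ≤ ⟪x, u⟫ := (hAin x hxA).le
        have hσB : σ x ∈ B := hσAB x hxA
        have hσA : σ x ∉ A := fun hc => absurd (hAin _ hc) (not_lt.2 (hBin _ hσB).le)
        rw [if_pos h1, if_pos hxA]
        show Fp (f x) (f (σ x)) = Fp r s
        rw [hfdef]
        simp only [hxA, if_true, hσA, if_false, hσB]
      · by_cases hxB : x ∈ B
        · have h1 : ¬ 0 ≤ ⟪x, u⟫ := not_le.2 (hBin x hxB)
          have hσA : σ x ∈ A := hσBA x hxB
          have hσB : σ x ∉ B := fun hc => absurd (hAin _ hσA) (not_lt.2 (hBin _ hc).le)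
          rw [if_neg h1, if_neg hxA, if_pos hxB]
          show Fm (f x) (f (σ x)) = Fm s r
          rw [hfdef]
          simp only [hxA, if_false, hxB, if_true, hσA]
        · have hσA : σ x ∉ A := fun hc => hxB (by rw [← hσσ x]; exact hσAB _ hc)
          have hσB : σ x ∉ B := fun hc => hxA (by rw [← hσσ x]; exact hσBA _ hc)
          rw [if_neg hxA, if_neg hxB]
          have hfx : f x = b0 := by rw [hfdef]; simp only [hxA, hxB, if_false]
          have hfσ : f (σ x) = b0 := by rw [hfdef]; simp only [hσA, hσB, if_false]
          rw [hfx, hfσ]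
          split_ifs
          · exact hfix b0
          · rw [← hdiag]; exact hfix b0
    have key : ∀ t : ℝ, (if t < Fp r s then volume A else 0) + (if t < Fm s r then volume A else 0)
        = (if t < r then volume A else 0) + (if t < s then volume A else 0) := by
      intro t
      by_cases hbt : t < b0
      · have hb1 : b0 ≤ r := by
          rw [hb0def]
          linarith [min_le_left (min r s) (min (Fp r s) (Fm s r)), min_le_left r s]
        have hb2 : b0 ≤ s := by
          rw [hb0def]
          linarith [min_le_left (min r s) (min (Fp r s) (Fm s r)), min_le_right r s]
        have hb3 : b0 ≤ Fp r s := by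
          rw [hb0def]
          linarith [min_le_right (min r s) (min (Fp r s) (Fm s r)), min_le_left (Fp r s) (Fm s r)]
        have hb4 : b0 ≤ Fm s r := by
          rw [hb0def]
          linarith [min_le_right (min r s) (min (Fp r s) (Fm s r)), min_le_right (Fp r s) (Fm s r)]
        rw [if_pos (lt_of_lt_of_le hbt hb1), if_pos (lt_of_lt_of_le hbt hb2),
          if_pos (lt_of_lt_of_le hbt hb3), if_pos (lt_of_lt_of_le hbt hb4)]
      · have h1 := h f hf t
        rw [hTf] at h1
        rw [vol_level_stmt8 volume A B measurableSet_ball hd (Fp r s) (Fm s r) b0 t hbt,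
          vol_level_stmt8 volume A B measurableSet_ball hd r s b0 t hbt, hmB] at h1
        exact h1
    apply pair_of_counts_stmt8
    intro t
    exact enn_helper_stmt8 hm0 hmt (key t)
  · -- pair condition → equimeasurable
    intro h f hf t
    have hfrr : ∀ r : ℝ, Fp r r = r := by
      intro r
      have := Set.pair_eq_pair_iff.1 (h r r)
      tauto
    set A := {x | t < T f x} with hAdef
    set B := {x | t < f x} with hBdef
    have hAm : MeasurableSet A := measurableSet_lt measurable_const (hmeas f hf)
    have hBm : MeasurableSet B := measurableSet_lt measurable_const hf
    have hTσ : ∀ x, 0 ≤ ⟪x, u⟫ → ({T f x, T f (σ x)} : Set ℝ) = {f x, f (σ x)} := by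
      intro x hx
      rcases eq_or_lt_of_le hx with heq | hlt
      · have hσx : σ x = x := by
          show x - (2 * ⟪x, u⟫) • u = x
          rw [← heq]; simp
        have hTx : T f x = f x := by
          rw [hpt, if_pos hx, hσapp, hσx]; exact hfrr (f x)
        rw [hσx, hTx]
      · have h1 : T f x = Fp (f x) (f (σ x)) := by rw [hpt, if_pos hx, hσapp]
        have h2 : T f (σ x) = Fm (f (σ x)) (f x) := by
          rw [hpt, hσapp, hσσ, if_neg]
          rw [hinner]
          simpa using hlt
        rw [h1, h2]
        exact h (f x) (f (σ x))
    have hind : ∀ x, 0 ≤ ⟪x, u⟫ →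
        A.indicator (1 : EuclideanSpace ℝ (Fin n) → ENNReal) x + (σ ⁻¹' A).indicator (1 : EuclideanSpace ℝ (Fin n) → ENNReal) x
          = B.indicator (1 : EuclideanSpace ℝ (Fin n) → ENNReal) x + (σ ⁻¹' B).indicator (1 : EuclideanSpace ℝ (Fin n) → ENNReal) x := by
      intro x hx
      have hp := Set.pair_eq_pair_iff.1 (hTσ x hx)
      simp only [Set.indicator_apply, Set.mem_preimage, hAdef, hBdef, Set.mem_setOf_eq, Pi.one_apply]
      rcases hp with ⟨e1, e2⟩ | ⟨e1, e2⟩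
      · simp only [e1, e2]
      · simp only [e1, e2]; exact add_comm _ _
    have hcont : Continuous fun x : EuclideanSpace ℝ (Fin n) => ⟪x, u⟫ :=
      continuous_id.inner continuous_const
    have hminner : Measurable fun x : EuclideanSpace ℝ (Fin n) => ⟪x, u⟫ := hcont.measurable
    set P : Set (EuclideanSpace ℝ (Fin n)) := {x | 0 ≤ ⟪x, u⟫} with hPdef
    set P0 : Set (EuclideanSpace ℝ (Fin n)) := {x | 0 < ⟪x, u⟫} with hP0def
    set Hs : Set (EuclideanSpace ℝ (Fin n)) := {x | ⟪x, u⟫ = 0} with hHdef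
    set N : Set (EuclideanSpace ℝ (Fin n)) := {x | ⟪x, u⟫ < 0} with hNdef
    have hPm : MeasurableSet P := measurableSet_le measurable_const hminner
    have hP0m : MeasurableSet P0 := measurableSet_lt measurable_const hminner
    have hHm : MeasurableSet Hs := hminner (measurableSet_singleton 0)
    have hNm : MeasurableSet N := measurableSet_lt hminner measurable_const
    have decomp : ∀ S : Set (EuclideanSpace ℝ (Fin n)), MeasurableSet S →
        volume S = volume (S ∩ P0) + volume (S ∩ Hs) + volume (σ ⁻¹' S ∩ P0) := by
      intro S hSm
      have h1 : volume (S ∩ P) + volume (S \ P) = volume S := measure_inter_add_diff S hPm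
      have h2 : S \ P = S ∩ N := by
        ext x; simp only [Set.mem_diff, Set.mem_inter_iff, hPdef, hNdef, Set.mem_setOf_eq, not_le]
      have h3 : volume (S ∩ N) = volume (σ ⁻¹' (S ∩ N)) :=
        (hmp.measure_preimage (hSm.inter hNm).nullMeasurableSet).symm
      have h4 : σ ⁻¹' (S ∩ N) = σ ⁻¹' S ∩ P0 := by
        ext x
        simp only [Set.mem_preimage, Set.mem_inter_iff, hNdef, hP0def, Set.mem_setOf_eq, hinner,
          neg_lt_zero]
      have h5 : volume (S ∩ P) = volume (S ∩ P0) + volume (S ∩ Hs) := by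
        have hu1 : S ∩ P = (S ∩ P0) ∪ (S ∩ Hs) := by
          ext x
          simp only [Set.mem_inter_iff, Set.mem_union, hPdef, hP0def, hHdef, Set.mem_setOf_eq]
          constructor
          · rintro ⟨hS, hle⟩
            rcases lt_or_eq_of_le hle with h' | h'
            · exact Or.inl ⟨hS, h'⟩
            · exact Or.inr ⟨hS, h'.symm⟩
          · rintro (⟨hS, h'⟩ | ⟨hS, h'⟩)
            · exact ⟨hS, h'.le⟩
            · exact ⟨hS, h'.ge⟩
        rw [hu1, measure_union _ (hSm.inter hHm)]
        exact Set.disjoint_left.2 fun x ⟨_, hx1⟩ ⟨_, hx2⟩ => by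
          simp only [hP0def, Set.mem_setOf_eq] at hx1
          simp only [hHdef, Set.mem_setOf_eq] at hx2
          exact hx1.ne' hx2
      rw [← h1, h2, h3, h4, h5]
    have hAH : A ∩ Hs = B ∩ Hs := by
      ext x
      simp only [Set.mem_inter_iff, hHdef, Set.mem_setOf_eq, hAdef, hBdef]
      constructor
      · rintro ⟨h1, h2⟩
        refine ⟨?_, h2⟩
        have hσx : σ x = x := by
          show x - (2 * ⟪x, u⟫) • u = x
          rw [h2]; simp
        rwa [hpt, if_pos h2.ge, hσapp, hσx, hfrr] at h1
      · rintro ⟨h1, h2⟩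
        refine ⟨?_, h2⟩
        have hσx : σ x = x := by
          show x - (2 * ⟪x, u⟫) • u = x
          rw [h2]; simp
        rwa [hpt, if_pos h2.ge, hσapp, hσx, hfrr]
    have hmain : volume (A ∩ P0) + volume (σ ⁻¹' A ∩ P0)
        = volume (B ∩ P0) + volume (σ ⁻¹' B ∩ P0) := by
      have lint : ∀ S : Set (EuclideanSpace ℝ (Fin n)), MeasurableSet S →
          volume (S ∩ P0) = ∫⁻ x in P0, S.indicator (1 : EuclideanSpace ℝ (Fin n) → ENNReal) x := by
        intro S hSm
        rw [lintegral_indicator_one hSm, Measure.restrict_apply hSm]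
      rw [lint A hAm, lint B hBm, lint _ (hσmeas hAm), lint _ (hσmeas hBm),
        ← lintegral_add_left (measurable_one.indicator hAm),
        ← lintegral_add_left (measurable_one.indicator hBm)]
      apply setLIntegral_congr_fun hP0m
      exact fun x hx => hind x (le_of_lt hx)
    rw [decomp _ hAm, decomp _ hBm, hAH,
      add_right_comm (volume (A ∩ P0)) (volume (B ∩ Hs)),
      add_right_comm (volume (B ∩ P0)) (volume (B ∩ Hs)), hmain]
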